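/- Let p be prime, k | p-1 with k > 2, and let A_k be the subgroup of k-th powers in Z_p^* with |A_k| = t = 2^n where n ≥ 6. Then A_k cannot be written as S₁ + ... + Sₙ with each |Sᵢ| = 2. Equivalently, if A_k = S₁ + ... + Sₙ for subsets Sᵢ of Z_p with |Sᵢ| ≥ 2, then |Sᵢ| ≥ 3 for some i. (One may assume as hypotheses: the Hanson–Petridis direct-sum property, the Hasse–Weil bound r(c) ≤ (p+1)/k² + ((k-1)(k-2)/k²)√p for c ≠ 0, and Mattarei's bound r(c) ≤ 3·2^(-2/3) t^(2/3) for c ≠ 0 when k ≥ 4 and t ≤ k³/4.) -/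

import Mathlib

open Finset Pointwise

lemma hwFalse (K T s : ℝ) (hK : 3 ≤ K) (hT : 64 ≤ T) (hk3 : K ^ 3 ≤ 4 * T)
    (hs0 : 0 ≤ s) (hs2 : s ^ 2 = K * T + 1)
    (hmain : T / 2 ≤ (K * T + 2) / K ^ 2 + ((K - 1) * (K - 2) / K ^ 2) * s) : False := by
  have hK0 : (0:ℝ) < K := by linarith
  have hkle : K ≤ (T - 4) / 4 := by
    by_contra h
    push_neg at h
    have h1 : ((T - 4) / 4) ^ 3 < K ^ 3 := by
      apply pow_lt_pow_left₀ h (by linarith)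
      norm_num
    nlinarith
  have hsle : s ≤ T / 2 - 1 := by
    by_contra h
    push_neg at h
    nlinarith
  have hX : ((K * T + 2) / K ^ 2 + ((K - 1) * (K - 2) / K ^ 2) * s) * K ^ 2
      = (K * T + 2) + (K - 1) * (K - 2) * s := by
    field_simp
  have h2 := mul_le_mul_of_nonneg_right hmain (le_of_lt (by positivity : (0:ℝ) < K ^ 2))
  rw [hX] at h2
  have h3 : (K - 1) * (K - 2) * s ≤ (K - 1) * (K - 2) * (T / 2 - 1) :=
    mul_le_mul_of_nonneg_left hsle (by nlinarith)
  nlinarith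

lemma matFalse (n : ℕ) (hn : 6 ≤ n)
    (h : (2:ℝ) ^ (n - 1) ≤ 3 * (2:ℝ) ^ (-(2:ℝ) / 3) * ((2:ℝ) ^ n) ^ ((2:ℝ) / 3)) : False := by
  have hL0 : (0:ℝ) ≤ (2:ℝ) ^ (n - 1) := by positivity
  have h3 := pow_le_pow_left₀ hL0 h 3
  have e1 : ((2:ℝ) ^ (-(2:ℝ) / 3)) ^ (3:ℕ) = 1 / 4 := by
    rw [← Real.rpow_natCast ((2:ℝ) ^ (-(2:ℝ) / 3)) 3, ← Real.rpow_mul (by norm_num)]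
    norm_num
  have e2 : (((2:ℝ) ^ n) ^ ((2:ℝ) / 3)) ^ (3:ℕ) = ((2:ℝ) ^ n) ^ (2:ℕ) := by
    rw [← Real.rpow_natCast (((2:ℝ) ^ n) ^ ((2:ℝ) / 3)) 3, ← Real.rpow_mul (by positivity)]
    norm_num
  rw [mul_pow, mul_pow, e1, e2] at h3
  have e3 : ((2:ℝ) ^ (n - 1)) ^ (3:ℕ) = 2 ^ (2 * n) * 2 ^ (n - 3) := by
    rw [← pow_mul, ← pow_add]
    congr 1
    omega
  have e4 : ((2:ℝ) ^ n) ^ (2:ℕ) = 2 ^ (2 * n) := by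
    rw [← pow_mul]
    ring_nf
  rw [e3, e4] at h3
  have h8 : (8:ℝ) ≤ 2 ^ (n - 3) := by
    calc (8:ℝ) = 2 ^ (3:ℕ) := by norm_num
    _ ≤ 2 ^ (n - 3) := by
      apply pow_le_pow_right₀ (by norm_num)
      omega
  nlinarith [pow_pos (show (0:ℝ) < 2 by norm_num) (2 * n)]

theorem stmt12 (p k n : ℕ) [Fact p.Prime] (hk : k ∣ p - 1) (hk2 : 2 < k) (hn : 6 ≤ n)
    (A : Finset (ZMod p))
    (hA : A = Finset.image (fun y : (ZMod p)ˣ => ((y : ZMod p)) ^ k) Finset.univ)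
    (ht : A.card = 2 ^ n)
    (hdirect : ∀ (m : ℕ) (S : Fin m → Finset (ZMod p)), (∀ i, (S i).Nonempty) →
      A = ∑ i, S i → A.card = ∏ i, (S i).card)
    (hHW : ∀ c : ZMod p, c ≠ 0 →
      ((((A ×ˢ A).filter (fun q => q.1 + q.2 = c)).card : ℝ)) ≤
        ((p : ℝ) + 1) / (k : ℝ) ^ 2 +
          (((k : ℝ) - 1) * ((k : ℝ) - 2) / (k : ℝ) ^ 2) * Real.sqrt p)
    (hMat : 4 ≤ k → 4 * A.card ≤ k ^ 3 → ∀ c : ZMod p, c ≠ 0 →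
      ((((A ×ˢ A).filter (fun q => q.1 + q.2 = c)).card : ℝ)) ≤
        3 * (2 : ℝ) ^ (-(2 : ℝ) / 3) * (A.card : ℝ) ^ ((2 : ℝ) / 3))
    (S : Fin n → Finset (ZMod p)) (hS2 : ∀ i, 2 ≤ (S i).card)
    (hsum : A = ∑ i, S i) :
    ∃ i, 3 ≤ (S i).card := by
  classical
  by_contra hcon
  push_neg at hcon
  have hS2' : ∀ i, (S i).card = 2 := fun i => le_antisymm (by have := hcon i; omega) (hS2 i)
  have h64 : 64 ≤ 2 ^ n := by
    calc 64 = 2 ^ 6 := by norm_num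
    _ ≤ 2 ^ n := Nat.pow_le_pow_right (by norm_num) hn
  -- Step 1 : p - 1 = k * 2 ^ n
  have hcardA : A.card = (p - 1) / k := by
    obtain ⟨g, hg⟩ := IsCyclic.exists_generator (α := (ZMod p)ˣ)
    have hog : orderOf g = p - 1 := by
      rw [orderOf_eq_card_of_forall_mem_zpowers hg, Nat.card_eq_fintype_card, ZMod.card_units]
    have himg : Finset.image (fun y : (ZMod p)ˣ => y ^ k) Finset.univ
        = (Subgroup.zpowers (g ^ k) : Set (ZMod p)ˣ).toFinset := by
      ext x
      simp only [Finset.mem_image, Finset.mem_univ, true_and, Set.mem_toFinset, SetLike.mem_coe,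
        Subgroup.mem_zpowers_iff]
      constructor
      · rintro ⟨y, rfl⟩
        obtain ⟨m, rfl⟩ := hg y
        exact ⟨m, by rw [← zpow_natCast (g ^ m) k, ← zpow_mul, mul_comm, zpow_mul, zpow_natCast]⟩
      · rintro ⟨m, rfl⟩
        exact ⟨g ^ m, by rw [← zpow_natCast (g ^ m) k, ← zpow_mul, mul_comm, zpow_mul, zpow_natCast]⟩
    have hA2 : A = Finset.image Units.val (Finset.image (fun y : (ZMod p)ˣ => y ^ k) Finset.univ) := by
      rw [hA, Finset.image_image]
      congr 1
    rw [hA2, Finset.card_image_of_injective _ Units.val_injective, himg, Set.toFinset_card,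
      ← Nat.card_eq_fintype_card]
    rw [show Nat.card ↑(↑(Subgroup.zpowers (g ^ k)) : Set (ZMod p)ˣ)
        = Nat.card (Subgroup.zpowers (g ^ k)) from rfl,
      Nat.card_zpowers, orderOf_pow, hog, Nat.gcd_eq_right hk]
  have hp1 : p - 1 = k * 2 ^ n := by
    rw [hcardA] at ht
    exact Nat.eq_mul_of_div_eq_right hk ht
  -- Step 2 : A is closed under negation
  have hneg : ∀ x ∈ A, -x ∈ A := by
    have hpow : ∀ x ∈ A, x ^ (2 ^ n) = 1 := by
      intro x hx
      rw [hA] at hx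
      obtain ⟨y, -, rfl⟩ := Finset.mem_image.mp hx
      rw [← pow_mul, ← hp1, ZMod.pow_card_sub_one_eq_one (Units.ne_zero y)]
    have hroots : A = (Polynomial.nthRoots (2 ^ n) (1 : ZMod p)).toFinset := by
      apply Finset.eq_of_subset_of_card_le
      · intro x hx
        rw [Multiset.mem_toFinset, Polynomial.mem_nthRoots (by positivity)]
        exact hpow x hx
      · calc (Polynomial.nthRoots (2 ^ n) (1 : ZMod p)).toFinset.card
            ≤ Multiset.card (Polynomial.nthRoots (2 ^ n) (1 : ZMod p)) :=
              Multiset.toFinset_card_le _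
          _ ≤ 2 ^ n := Polynomial.card_nthRoots _ _
          _ = A.card := ht.symm
    have hm1 : (-1 : ZMod p) ∈ A := by
      rw [hroots, Multiset.mem_toFinset, Polynomial.mem_nthRoots (by positivity)]
      exact Even.neg_one_pow (by simpa using Nat.even_pow.mpr ⟨even_two, by omega⟩)
    intro x hx
    rw [hA] at hm1 hx ⊢
    obtain ⟨u, -, hu⟩ := Finset.mem_image.mp hm1
    obtain ⟨y, -, rfl⟩ := Finset.mem_image.mp hx
    refine Finset.mem_image.mpr ⟨u * y, Finset.mem_univ _, ?_⟩
    push_cast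
    rw [mul_pow, hu]
    ring
  -- Step 3 : there is c ≠ 0 with many representations
  obtain ⟨c, hc, hcount⟩ : ∃ c : ZMod p, c ≠ 0 ∧
      2 ^ (n - 1) ≤ ((A ×ˢ A).filter (fun q => q.1 + q.2 = c)).card := by
    have hn0 : 0 < n := by omega
    set i0 : Fin n := ⟨0, hn0⟩ with hi0
    obtain ⟨a, b, hab, hS0⟩ := Finset.card_eq_two.mp (hS2' i0)
    set B : Finset (ZMod p) := ∑ i ∈ Finset.univ.erase i0, S i with hB
    have hsplit : A = S i0 + B := by
      rw [hsum, ← Finset.add_sum_erase _ S (Finset.mem_univ i0)]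
    have hBne : B.Nonempty := by
      rcases Finset.eq_empty_or_nonempty B with h | h
      · exfalso
        have hAe : A = ∅ := by rw [hsplit, h, Finset.add_empty]
        have := ht ▸ (Finset.card_eq_zero.mpr hAe)
        exact absurd this.symm (by positivity)
      · exact h
    have hd2 := hdirect 2 ![S i0, B] (by
        intro i
        fin_cases i
        · exact Finset.card_pos.mp (by simp [hS2' i0])
        · exact hBne)
      (by rw [Fin.sum_univ_two]; simpa using hsplit)
    rw [Fin.prod_univ_two] at hd2
    simp only [Matrix.cons_val_zero, Matrix.cons_val_one, Matrix.head_cons] at hd2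
    have hBcard : B.card = 2 ^ (n - 1) := by
      rw [ht, hS2' i0] at hd2
      have h2 : 2 ^ n = 2 * 2 ^ (n - 1) := by
        rw [← pow_succ']
        congr 1
        omega
      omega
    have ha : a ∈ S i0 := by rw [hS0]; simp
    have hb : b ∈ S i0 := by rw [hS0]; simp
    refine ⟨a - b, sub_ne_zero.mpr hab, ?_⟩
    rw [← hBcard]
    apply Finset.card_le_card_of_injOn (fun y => (a + y, -(b + y)))
    · intro y hy
      simp only [Finset.mem_coe, Finset.mem_filter, Finset.mem_product]
      refine ⟨⟨?_, ?_⟩, by ring⟩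
      · exact hsplit ▸ Finset.add_mem_add ha hy
      · exact hneg _ (hsplit ▸ Finset.add_mem_add hb hy)
    · intro y hy y' hy' h
      simpa using congrArg Prod.fst h
  have hcountR : (2:ℝ) ^ (n - 1) ≤ (((A ×ˢ A).filter (fun q => q.1 + q.2 = c)).card : ℝ) := by
    calc (2:ℝ) ^ (n - 1) = ((2 ^ (n - 1) : ℕ) : ℝ) := by push_cast; ring
    _ ≤ _ := Nat.cast_le.mpr hcount
  -- Step 4 : case split and numeric contradiction
  by_cases hcase : 4 ≤ k ∧ 4 * A.card ≤ k ^ 3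
  · -- Mattarei bound
    refine matFalse n hn ?_
    have hM := hMat hcase.1 hcase.2 c hc
    rw [ht] at hM
    calc (2:ℝ) ^ (n - 1) ≤ _ := hcountR
    _ ≤ 3 * (2 : ℝ) ^ (-(2 : ℝ) / 3) * (((2 ^ n : ℕ) : ℝ)) ^ ((2 : ℝ) / 3) := hM
    _ = 3 * (2 : ℝ) ^ (-(2 : ℝ) / 3) * ((2:ℝ) ^ n) ^ ((2 : ℝ) / 3) := by push_cast; ring
  · -- Hasse–Weil bound
    have hk3 : k ^ 3 ≤ 4 * 2 ^ n := by
      rw [ht] at hcase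
      rcases Nat.lt_or_ge k 4 with h4 | h4
      · have : k = 3 := by omega
        subst this
        omega
      · have := hcase
        push_neg at this
        have := this h4
        omega
    have hpval : p = k * 2 ^ n + 1 := by
      have := (Fact.out : p.Prime).one_lt
      omega
    have hH := hHW c hc
    refine hwFalse (k : ℝ) ((2:ℝ) ^ n) (Real.sqrt p) (by exact_mod_cast hk2) ?_ ?_
      (Real.sqrt_nonneg _) ?_ ?_
    · exact_mod_cast h64
    · exact_mod_cast hk3
    · rw [Real.sq_sqrt (by positivity)]
      rw [hpval]
      push_cast
      ring
    · have hT2 : ((2:ℝ) ^ n) / 2 = (2:ℝ) ^ (n - 1) := by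
        rw [div_eq_iff (by norm_num : (2:ℝ) ≠ 0), ← pow_succ]
        congr 1
        omega
      rw [hT2]
      calc (2:ℝ) ^ (n - 1) ≤ _ := hcountR
      _ ≤ ((p : ℝ) + 1) / (k : ℝ) ^ 2 +
          (((k : ℝ) - 1) * ((k : ℝ) - 2) / (k : ℝ) ^ 2) * Real.sqrt p := hH
      _ = ((k:ℝ) * (2:ℝ) ^ n + 2) / (k : ℝ) ^ 2 +
          (((k : ℝ) - 1) * ((k : ℝ) - 2) / (k : ℝ) ^ 2) * Real.sqrt p := by
        rw [hpval]; push_cast; ring_nf
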